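/- Let R be a principal ideal domain, (M, λ) a non-degenerate symmetric bilinear form on a finitely generated free R-module, and (v₁,...,v_k) an isotropic unimodular sequence in M. Then there exists a witnessing sequence: vectors w₁,...,w_k ∈ M with λ(vᵢ, wⱼ) = δᵢⱼ and λ(wᵢ, wⱼ) = 0 for i ≠ j. -/

import Mathlib

/-- An isotropic unimodular sequence: the `v i` form a basis of a free direct summand
of `M` and are pairwise (and self) orthogonal for `B`. -/
def IsoUnimodSeq (R : Type*) [CommRing R] {M : Type*} [AddCommGroup M] [Module R M]
    (B : LinearMap.BilinForm R M) {k : ℕ} (v : Fin k → M) : Prop :=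
  LinearIndependent R v ∧
  (∃ q : Submodule R M, IsCompl (Submodule.span R (Set.range v)) q) ∧
  ∀ i j, B (v i) (v j) = 0

/-- Every isotropic unimodular sequence for a non-degenerate symmetric
form over a PID admits a witnessing sequence: `w₁,...,w_k` with `B vᵢ wⱼ = δᵢⱼ` and
`B wᵢ wⱼ = 0` for `i ≠ j`. -/
theorem stmt_18 (R : Type*) [CommRing R] [IsDomain R] [IsPrincipalIdealRing R]
    (M : Type*) [AddCommGroup M] [Module R M] [Module.Free R M] [Module.Finite R M]
    (B : LinearMap.BilinForm R M) (hsymm : B.IsSymm)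
    (hnd : Function.Bijective fun v : M => B v)
    (k : ℕ) (v : Fin k → M) (hv : IsoUnimodSeq R B v) :
    ∃ w : Fin k → M,
      (∀ i j, B (v i) (w j) = if i = j then 1 else 0) ∧
      ∀ i j, i ≠ j → B (w i) (w j) = 0 := by
  classical
  obtain ⟨hli, ⟨q, hq⟩, horth⟩ := hv
  set p := Submodule.span R (Set.range v) with hp
  let b : Module.Basis (Fin k) R p := Module.Basis.span hli
  let proj : M →ₗ[R] p := Submodule.linearProjOfIsCompl p q hq
  let φ : Fin k → (M →ₗ[R] R) := fun j => (b.coord j).comp proj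
  have hφ : ∀ j i, φ j (v i) = if i = j then 1 else 0 := by
    intro j i
    have hv_mem : v i ∈ p := Submodule.subset_span ⟨i, rfl⟩
    have hproj : proj (v i) = ⟨v i, hv_mem⟩ :=
      Submodule.linearProjOfIsCompl_apply_left hq ⟨v i, hv_mem⟩
    have hb : b i = ⟨v i, hv_mem⟩ := Module.Basis.span_apply hli i
    simp only [φ, LinearMap.comp_apply, hproj, ← hb, Module.Basis.coord_apply,
      Module.Basis.repr_self, Finsupp.single_apply]
  choose u hu using fun j => hnd.2 (φ j)
  have huv : ∀ j i, B (u j) (v i) = if i = j then 1 else 0 := by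
    intro j i
    have := DFunLike.congr_fun (hu j) (v i)
    simpa [hφ j i] using this
  have hvu : ∀ i j, B (v i) (u j) = if i = j then 1 else 0 := by
    intro i j
    rw [← hsymm.eq (u j) (v i)]
    simpa using huv j i
  let c : Fin k → Fin k → R := fun l j => if l < j then B (u l) (u j) else 0
  refine ⟨fun j => u j - ∑ l, c l j • v l, ?_, ?_⟩
  · intro i j
    simp [map_sub, map_sum, map_smul, horth, hvu i j]
  · intro i j hij
    have h1 : ∀ i j, B (u i) (u j - ∑ l, c l j • v l) = B (u i) (u j) - c i j := by
      intro i j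
      simp [map_sub, map_sum, map_smul, huv i, Finset.sum_ite_eq', mul_comm]
    have h2 : ∀ l j, B (v l) (u j - ∑ m, c m j • v m) = if l = j then 1 else 0 := by
      intro l j
      simp [map_sub, map_sum, map_smul, horth, hvu l j]
    have key : B (u i - ∑ l, c l i • v l) (u j - ∑ l, c l j • v l)
        = B (u i) (u j) - c i j - c j i := by
      have hA : B (u i - ∑ l, c l i • v l) = B (u i) - B (∑ l, c l i • v l) := map_sub B _ _
      rw [hA, LinearMap.sub_apply, h1, map_sum, LinearMap.sum_apply]
      simp only [map_smul, LinearMap.smul_apply, h2, smul_eq_mul, mul_ite, mul_one, mul_zero]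
      rw [Finset.sum_ite_eq' Finset.univ j (fun l => c l i)]
      simp [sub_sub]
    rw [key]
    rcases lt_trichotomy i j with h | h | h
    · simp [c, h, h.not_gt]
    · exact absurd h hij
    · have hsym : B (u j) (u i) = B (u i) (u j) := by
        rw [← hsymm.eq (u i) (u j)]
      simp [c, h, h.not_gt, hsym]
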